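/- Let A be an n×m complex matrix, ρ its largest entry absolute value, and 1 < p ≤ q < ∞. Suppose (i) every entry of A of absolute value ρ is the only nonzero entry of its row and of its column, and (ii) the matrix C obtained from A by replacing all entries of absolute value ρ by 0 satisfies ‖C‖_{p,q} ≤ ρ. Then ‖A‖_{r,s} = m^{1-1/r} n^{1/s} ‖A‖_{p,q} · m^{-(1-1/p)} n^{-1/q} holds with equality in the bound ‖A‖_{r,s} ≤ m^{(1/p)-(1/r)} n^{(1/s)-(1/q)} ‖A‖_{p,q} for all r < p and s > q; in particular ‖A‖_{p,q} = ρ. -/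

import Mathlib

open scoped BigOperators ENNReal

/-- The Hölder `ℓ_p` norm of a vector in `ℂ^m`, for `p ∈ [1,∞]`. -/
noncomputable def lpNorm {m : ℕ} (p : ℝ≥0∞) (x : Fin m → ℂ) : ℝ :=
  if p = ⊤ then ⨆ i, ‖x i‖ else (∑ i, ‖x i‖ ^ p.toReal) ^ (1 / p.toReal)

/-- The operator norm of an `n × m` complex matrix induced by `ℓ_p` on `ℂ^m`
and `ℓ_q` on `ℂ^n`. -/
noncomputable def opNorm {n m : ℕ} (p q : ℝ≥0∞) (A : Matrix (Fin n) (Fin m) ℂ) : ℝ :=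
  ⨆ x : {x : Fin m → ℂ // x ≠ 0}, lpNorm q (A.mulVec x.1) / lpNorm p x.1

/-- The operator norm of an `n × m` complex matrix induced by general norms
`μ` on `ℂ^m` and `ν` on `ℂ^n`. -/
noncomputable def opNormGen {n m : ℕ} (μ : (Fin m → ℂ) → ℝ) (ν : (Fin n → ℂ) → ℝ)
    (A : Matrix (Fin n) (Fin m) ℂ) : ℝ :=
  ⨆ x : {x : Fin m → ℂ // x ≠ 0}, ν (A.mulVec x.1) / μ x.1

section helperLemmas
open Finset

lemma myAddRpow {a b t : ℝ} (ha : 0 ≤ a) (hb : 0 ≤ b) (ht : 1 ≤ t) :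
    a ^ t + b ^ t ≤ (a + b) ^ t := by
  have h := NNReal.add_rpow_le_rpow_add a.toNNReal b.toNNReal ht
  have h2 := NNReal.coe_le_coe.2 h
  rw [NNReal.coe_add, NNReal.coe_rpow, NNReal.coe_rpow, NNReal.coe_rpow, NNReal.coe_add,
    Real.coe_toNNReal a ha, Real.coe_toNNReal b hb] at h2
  exact h2

lemma mySumRpow {ι : Type*} (s : Finset ι) (f : ι → ℝ) (hf : ∀ i, 0 ≤ f i) {t : ℝ}
    (ht : 1 ≤ t) : ∑ i ∈ s, f i ^ t ≤ (∑ i ∈ s, f i) ^ t := by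
  classical
  induction s using Finset.induction with
  | empty => simp [Real.zero_rpow (by linarith : t ≠ 0)]
  | @insert a s h ih =>
    rw [Finset.sum_insert h, Finset.sum_insert h]
    calc f a ^ t + ∑ i ∈ s, f i ^ t ≤ f a ^ t + (∑ i ∈ s, f i) ^ t := by linarith
      _ ≤ (f a + ∑ i ∈ s, f i) ^ t :=
        myAddRpow (hf a) (Finset.sum_nonneg fun i _ => hf i) ht

lemma lpNorm_nonneg {m : ℕ} (p : ℝ≥0∞) (x : Fin m → ℂ) : 0 ≤ lpNorm p x := by
  unfold lpNorm
  split
  · exact Real.iSup_nonneg fun i => norm_nonneg _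
  · positivity

lemma one_le_toReal {p : ℝ≥0∞} (h1 : 1 ≤ p) (h2 : p ≠ ⊤) : 1 ≤ p.toReal := by
  have := ENNReal.toReal_mono h2 h1
  simpa using this

lemma lpNorm_eq {m : ℕ} {p : ℝ≥0∞} (hp : p ≠ ⊤) (x : Fin m → ℂ) :
    lpNorm p x = (∑ i, ‖x i‖ ^ p.toReal) ^ (1 / p.toReal) := if_neg hp

lemma norm_le_lpNorm {m : ℕ} {p : ℝ≥0∞} (h1 : 1 ≤ p) (hp : p ≠ ⊤) (x : Fin m → ℂ)
    (j : Fin m) : ‖x j‖ ≤ lpNorm p x := by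
  have ht : 1 ≤ p.toReal := one_le_toReal h1 hp
  have ht0 : 0 < p.toReal := by linarith
  rw [lpNorm_eq hp]
  have h : ‖x j‖ ^ p.toReal ≤ ∑ i, ‖x i‖ ^ p.toReal :=
    Finset.single_le_sum (f := fun i => ‖x i‖ ^ p.toReal)
      (fun i _ => by positivity) (Finset.mem_univ j)
  calc ‖x j‖ = (‖x j‖ ^ p.toReal) ^ (1 / p.toReal) := by
        rw [one_div, Real.rpow_rpow_inv (norm_nonneg _) ht0.ne']
    _ ≤ _ := Real.rpow_le_rpow (by positivity) h (by positivity)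

lemma lpNorm_pos {m : ℕ} {p : ℝ≥0∞} (h1 : 1 ≤ p) (hp : p ≠ ⊤) {x : Fin m → ℂ}
    (hx : x ≠ 0) : 0 < lpNorm p x := by
  obtain ⟨j, hj⟩ := Function.ne_iff.1 hx
  have : (0:ℝ) < ‖x j‖ := by simpa using hj
  exact lt_of_lt_of_le this (norm_le_lpNorm h1 hp x j)

lemma lpNorm_anti {m : ℕ} {p q : ℝ≥0∞} (h1 : 1 ≤ p) (hp : p ≠ ⊤) (hpq : p ≤ q)
    (x : Fin m → ℂ) : lpNorm q x ≤ lpNorm p x := by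
  by_cases hq : q = ⊤
  · rw [lpNorm, if_pos hq]
    exact Real.iSup_le (fun i => norm_le_lpNorm h1 hp x i) (lpNorm_nonneg _ _)
  · have ha : 1 ≤ p.toReal := one_le_toReal h1 hp
    have hb : p.toReal ≤ q.toReal := ENNReal.toReal_mono hq hpq
    have ha0 : 0 < p.toReal := by linarith
    have hb0 : 0 < q.toReal := by linarith
    rw [lpNorm_eq hp, lpNorm_eq hq]
    set a := p.toReal
    set b := q.toReal
    have key : ∑ i, ‖x i‖ ^ b ≤ (∑ i, ‖x i‖ ^ a) ^ (b / a) := by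
      have h1' : ∀ i : Fin m, ‖x i‖ ^ b = (‖x i‖ ^ a) ^ (b / a) := by
        intro i
        rw [← Real.rpow_mul (norm_nonneg _), mul_div_cancel₀ _ ha0.ne']
      rw [Finset.sum_congr rfl fun i _ => h1' i]
      exact mySumRpow _ _ (fun i => by positivity) (by
        rw [le_div_iff₀ ha0]; linarith)
    calc (∑ i, ‖x i‖ ^ b) ^ (1 / b)
        ≤ ((∑ i, ‖x i‖ ^ a) ^ (b / a)) ^ (1 / b) :=
          Real.rpow_le_rpow (by positivity) key (by positivity)
      _ = (∑ i, ‖x i‖ ^ a) ^ (1 / a) := by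
          rw [← Real.rpow_mul (by positivity)]
          congr 1
          field_simp

lemma lpNorm_single {n : ℕ} {b : ℝ≥0∞} (h1 : 1 ≤ b) (y : Fin n → ℂ) (i0 : Fin n)
    (h : ∀ i, i ≠ i0 → y i = 0) : lpNorm b y = ‖y i0‖ := by
  by_cases hb : b = ⊤
  · rw [lpNorm, if_pos hb]
    have : Nonempty (Fin n) := ⟨i0⟩
    apply le_antisymm
    · apply ciSup_le
      intro i
      by_cases hi : i = i0
      · subst hi; exact le_rfl
      · rw [h i hi]; simp
    · exact le_ciSup (f := fun i => ‖y i‖) (Set.Finite.bddAbove (Set.finite_range _)) i0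
  · have ht : 1 ≤ b.toReal := one_le_toReal h1 hb
    have ht0 : 0 < b.toReal := by linarith
    rw [lpNorm_eq hb]
    have : ∑ i, ‖y i‖ ^ b.toReal = ‖y i0‖ ^ b.toReal := by
      apply Finset.sum_eq_single
      · intro i _ hi
        rw [h i hi]
        simp [Real.zero_rpow ht0.ne']
      · intro hh; exact absurd (Finset.mem_univ i0) hh
    rw [this, one_div, Real.rpow_rpow_inv (norm_nonneg _) ht0.ne']

lemma ratio_bound {n m : ℕ} {p q : ℝ≥0∞} (h1 : 1 ≤ p) (hp : p ≠ ⊤) (hq1 : 1 ≤ q)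
    (A : Matrix (Fin n) (Fin m) ℂ) (x : Fin m → ℂ) (hx : x ≠ 0) :
    lpNorm q (A.mulVec x) / lpNorm p x ≤ ∑ i, ∑ j, ‖A i j‖ := by
  set M := ∑ i, ∑ j, ‖A i j‖ with hM
  have hL : 0 < lpNorm p x := lpNorm_pos h1 hp hx
  rw [div_le_iff₀ hL]
  have key : lpNorm q (A.mulVec x) ≤ M * lpNorm p x := by
    have h2 : lpNorm q (A.mulVec x) ≤ lpNorm 1 (A.mulVec x) := by
      exact lpNorm_anti le_rfl (by simp) hq1 _
    have h3 : lpNorm 1 (A.mulVec x) = ∑ i, ‖A.mulVec x i‖ := by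
      rw [lpNorm_eq (by simp)]
      simp
    have h4 : ∀ i, ‖A.mulVec x i‖ ≤ (∑ j, ‖A i j‖) * lpNorm p x := by
      intro i
      have hmv : A.mulVec x i = ∑ j, A i j * x j := rfl
      calc ‖A.mulVec x i‖ ≤ ∑ j, ‖A i j * x j‖ := by
            rw [hmv]; exact norm_sum_le _ _
        _ = ∑ j, ‖A i j‖ * ‖x j‖ := by simp [norm_mul]
        _ ≤ ∑ j, ‖A i j‖ * lpNorm p x := by
            apply Finset.sum_le_sum
            intro j _
            exact mul_le_mul_of_nonneg_left (norm_le_lpNorm h1 hp x j) (norm_nonneg _)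
        _ = (∑ j, ‖A i j‖) * lpNorm p x := by rw [Finset.sum_mul]
    calc lpNorm q (A.mulVec x) ≤ ∑ i, ‖A.mulVec x i‖ := h2.trans_eq h3
      _ ≤ ∑ i, (∑ j, ‖A i j‖) * lpNorm p x := Finset.sum_le_sum fun i _ => h4 i
      _ = M * lpNorm p x := by rw [← Finset.sum_mul]
  exact key

lemma opNorm_bddAbove {n m : ℕ} {p q : ℝ≥0∞} (h1 : 1 ≤ p) (hp : p ≠ ⊤) (hq1 : 1 ≤ q)
    (A : Matrix (Fin n) (Fin m) ℂ) :
    BddAbove (Set.range fun x : {x : Fin m → ℂ // x ≠ 0} =>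
      lpNorm q (A.mulVec x.1) / lpNorm p x.1) := by
  refine ⟨∑ i, ∑ j, ‖A i j‖, ?_⟩
  rintro r ⟨x, rfl⟩
  exact ratio_bound h1 hp hq1 A x.1 x.2

lemma le_opNorm {n m : ℕ} {p q : ℝ≥0∞} (h1 : 1 ≤ p) (hp : p ≠ ⊤) (hq1 : 1 ≤ q)
    (A : Matrix (Fin n) (Fin m) ℂ) (x : Fin m → ℂ) (hx : x ≠ 0) :
    lpNorm q (A.mulVec x) / lpNorm p x ≤ opNorm p q A :=
  le_ciSup (opNorm_bddAbove h1 hp hq1 A) ⟨x, hx⟩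

lemma opNorm_le {n m : ℕ} {p q : ℝ≥0∞} (h1 : 1 ≤ p) (hp : p ≠ ⊤)
    (A : Matrix (Fin n) (Fin m) ℂ) {K : ℝ} (hK : 0 ≤ K)
    (h : ∀ x : Fin m → ℂ, lpNorm q (A.mulVec x) ≤ K * lpNorm p x) :
    opNorm p q A ≤ K := by
  apply Real.iSup_le _ hK
  intro x
  rw [div_le_iff₀ (lpNorm_pos h1 hp x.2)]
  exact h x.1

lemma lpNorm_zero {m : ℕ} {p : ℝ≥0∞} (h1 : 1 ≤ p) : lpNorm p (0 : Fin m → ℂ) = 0 := by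
  by_cases hp : p = ⊤
  · rw [lpNorm, if_pos hp]
    apply le_antisymm (Real.iSup_le (fun i => by simp) le_rfl)
    have := lpNorm_nonneg p (0 : Fin m → ℂ)
    rwa [lpNorm, if_pos hp] at this
  · have ht0 : 0 < p.toReal := lt_of_lt_of_le zero_lt_one (one_le_toReal h1 hp)
    rw [lpNorm_eq hp]
    simp only [Pi.zero_apply, norm_zero, Real.zero_rpow ht0.ne', Finset.sum_const_zero]
    exact Real.zero_rpow (by positivity)

lemma mulVec_le_opNorm {n m : ℕ} {p q : ℝ≥0∞} (h1 : 1 ≤ p) (hp : p ≠ ⊤) (hq1 : 1 ≤ q)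
    (A : Matrix (Fin n) (Fin m) ℂ) {K : ℝ} (hK : 0 ≤ K) (hO : opNorm p q A ≤ K)
    (x : Fin m → ℂ) : lpNorm q (A.mulVec x) ≤ K * lpNorm p x := by
  by_cases hx : x = 0
  · subst hx
    rw [Matrix.mulVec_zero, lpNorm_zero h1, lpNorm_zero hq1, mul_zero]
  · have := (le_opNorm h1 hp hq1 A x hx).trans hO
    rwa [div_le_iff₀ (lpNorm_pos h1 hp hx)] at this

lemma lpNorm_rpow {n : ℕ} {q : ℝ≥0∞} (hq : q ≠ ⊤) (h0 : 0 < q.toReal) (y : Fin n → ℂ) :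
    lpNorm q y ^ q.toReal = ∑ i, ‖y i‖ ^ q.toReal := by
  rw [lpNorm_eq hq, one_div, Real.rpow_inv_rpow (Finset.sum_nonneg fun i _ => by positivity) h0.ne']

lemma key_estimate {n m : ℕ} (A : Matrix (Fin n) (Fin m) ℂ) (p q : ℝ≥0∞)
    (hp : 1 < p) (hpq : p ≤ q) (hq : q ≠ ⊤) {ρ : ℝ} (hρpos : 0 < ρ)
    (hi : ∀ i j, ‖A i j‖ = ρ →
      (∀ j', j' ≠ j → A i j' = 0) ∧ (∀ i', i' ≠ i → A i' j = 0))
    (hC : ∀ y, lpNorm q ((Matrix.of fun i j =>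
      if ‖A i j‖ = ρ then 0 else A i j).mulVec y) ≤ ρ * lpNorm p y)
    (j0 : Fin m) (x : Fin m → ℂ) :
    lpNorm q (A.mulVec x) ≤ ρ * lpNorm p x := by
  classical
  set C : Matrix (Fin n) (Fin m) ℂ :=
    Matrix.of fun i j => if ‖A i j‖ = ρ then 0 else A i j with hCdef
  have hpt : p ≠ ⊤ := fun h => hq (top_le_iff.mp (h ▸ hpq))
  have ht1 : 1 ≤ p.toReal := one_le_toReal hp.le hpt
  have htu : p.toReal ≤ q.toReal := ENNReal.toReal_mono hq hpq
  set t := p.toReal with htdef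
  set u := q.toReal with hudef
  have ht0 : 0 < t := by linarith
  have hu0 : 0 < u := by linarith
  have hu1 : 1 ≤ u := by linarith
  have hut1 : 1 ≤ u / t := by rw [le_div_iff₀ ht0]; linarith
  set g : Fin n → Fin m := fun i => if h : ∃ j, ‖A i j‖ = ρ then h.choose else j0 with hgdef
  set R : Finset (Fin n) := Finset.univ.filter (fun i => ∃ j, ‖A i j‖ = ρ) with hRdef
  have hg : ∀ i ∈ R, ‖A i (g i)‖ = ρ := by
    intro i hiR
    have h : ∃ j, ‖A i j‖ = ρ := (Finset.mem_filter.mp hiR).2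
    simp only [hgdef, dif_pos h]
    exact h.choose_spec
  set S : Finset (Fin m) := R.image g with hSdef
  set x' : Fin m → ℂ := fun j => if j ∈ S then 0 else x j with hx'def
  -- columns in S of C are zero
  have hcol : ∀ j ∈ S, ∀ i', C i' j = 0 := by
    intro j hj i'
    obtain ⟨i2, hi2R, rfl⟩ := Finset.mem_image.mp hj
    have h2 := hg i2 hi2R
    by_cases hii : i' = i2
    · subst hii; simp only [hCdef, Matrix.of_apply, if_pos h2]
    · have : A i' (g i2) = 0 := (hi i2 (g i2) h2).2 i' hii
      simp only [hCdef, Matrix.of_apply, this]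
      split <;> rfl
  have hCx : C.mulVec x = C.mulVec x' := by
    funext i
    show ∑ j, C i j * x j = ∑ j, C i j * x' j
    apply Finset.sum_congr rfl
    intro j _
    by_cases hj : j ∈ S
    · rw [hcol j hj i]; ring
    · simp only [hx'def, if_neg hj]
  -- rows in R
  have hrowR : ∀ i ∈ R, A.mulVec x i = A i (g i) * x (g i) := by
    intro i hiR
    show ∑ j, A i j * x j = A i (g i) * x (g i)
    apply Finset.sum_eq_single
    · intro j _ hj
      rw [(hi i (g i) (hg i hiR)).1 j hj, zero_mul]
    · intro h; exact absurd (Finset.mem_univ _) h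
  -- rows not in R
  have hrowC : ∀ i ∉ R, A.mulVec x i = C.mulVec x i := by
    intro i hiR
    have hnot : ∀ j, ‖A i j‖ ≠ ρ := by
      intro j hj
      exact hiR (Finset.mem_filter.mpr ⟨Finset.mem_univ _, ⟨j, hj⟩⟩)
    show ∑ j, A i j * x j = ∑ j, C i j * x j
    apply Finset.sum_congr rfl
    intro j _
    simp only [hCdef, Matrix.of_apply, if_neg (hnot j)]
  -- injectivity of g on R
  have hginj : ∀ i₁ ∈ R, ∀ i₂ ∈ R, g i₁ = g i₂ → i₁ = i₂ := by
    intro i₁ h₁ i₂ h₂ he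
    by_contra hne
    have hz : A i₁ (g i₂) = 0 := (hi i₂ (g i₂) (hg i₂ h₂)).2 i₁ hne
    have := hg i₁ h₁
    rw [he, hz] at this
    simp at this
    exact hρpos.ne this
  set P := ∑ j ∈ S, ‖x j‖ ^ t with hPdef
  set Q := ∑ j ∈ Sᶜ, ‖x j‖ ^ t with hQdef
  have hP0 : 0 ≤ P := Finset.sum_nonneg fun j _ => by positivity
  have hQ0 : 0 ≤ Q := Finset.sum_nonneg fun j _ => by positivity
  have hx't : lpNorm p x' ^ t = Q := by
    rw [lpNorm_rpow hpt ht0]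
    rw [hQdef, ← Finset.sum_filter_add_sum_filter_not Finset.univ (· ∈ S) (fun j => ‖x' j‖ ^ t)]
    have e1 : ∑ j ∈ Finset.univ.filter (· ∈ S), ‖x' j‖ ^ t = 0 := by
      apply Finset.sum_eq_zero
      intro j hj
      have := (Finset.mem_filter.mp hj).2
      simp only [hx'def, if_pos this, norm_zero]
      exact Real.zero_rpow ht0.ne'
    have e2 : ∑ j ∈ Finset.univ.filter (¬ · ∈ S), ‖x' j‖ ^ t
        = ∑ j ∈ Sᶜ, ‖x j‖ ^ t := by
      apply Finset.sum_congr
      · ext j; simp [Finset.mem_compl]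
      · intro j hj
        have hjS : j ∉ S := Finset.mem_compl.mp hj
        simp only [hx'def, if_neg hjS]
    rw [e1, e2, zero_add]
  have hxt : lpNorm p x ^ t = P + Q := by
    rw [lpNorm_rpow hpt ht0, hPdef, hQdef, ← Finset.sum_add_sum_compl S]
  -- the main chain
  have main : lpNorm q (A.mulVec x) ^ u ≤ (ρ * lpNorm p x) ^ u := by
    rw [lpNorm_rpow hq hu0]
    rw [← Finset.sum_filter_add_sum_filter_not Finset.univ (· ∈ R) (fun i => ‖A.mulVec x i‖ ^ u)]
    have hT1 : ∑ i ∈ Finset.univ.filter (· ∈ R), ‖A.mulVec x i‖ ^ u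
        ≤ ρ ^ u * P ^ (u / t) := by
      have e : ∑ i ∈ Finset.univ.filter (· ∈ R), ‖A.mulVec x i‖ ^ u
          = ρ ^ u * ∑ j ∈ S, ‖x j‖ ^ u := by
        rw [Finset.mul_sum]
        have hfilter : Finset.univ.filter (· ∈ R) = R := by
          ext i; simp
        rw [hfilter, hSdef, Finset.sum_image hginj]
        apply Finset.sum_congr rfl
        intro i hiR
        rw [hrowR i hiR, norm_mul, hg i hiR,
          Real.mul_rpow hρpos.le (norm_nonneg _)]
      rw [e]
      apply mul_le_mul_of_nonneg_left _ (by positivity)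
      have e2 : ∀ j : Fin m, ‖x j‖ ^ u = (‖x j‖ ^ t) ^ (u / t) := by
        intro j
        rw [← Real.rpow_mul (norm_nonneg _), mul_div_cancel₀ _ ht0.ne']
      calc ∑ j ∈ S, ‖x j‖ ^ u = ∑ j ∈ S, (‖x j‖ ^ t) ^ (u / t) :=
            Finset.sum_congr rfl fun j _ => e2 j
        _ ≤ P ^ (u / t) := mySumRpow _ _ (fun j => by positivity) hut1
    have hT2 : ∑ i ∈ Finset.univ.filter (¬ · ∈ R), ‖A.mulVec x i‖ ^ u
        ≤ ρ ^ u * Q ^ (u / t) := by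
      have e : ∀ i ∈ Finset.univ.filter (¬ · ∈ R), ‖A.mulVec x i‖ ^ u
          = ‖C.mulVec x' i‖ ^ u := by
        intro i hiR
        rw [hrowC i (Finset.mem_filter.mp hiR).2, hCx]
      rw [Finset.sum_congr rfl e]
      calc ∑ i ∈ Finset.univ.filter (¬ · ∈ R), ‖C.mulVec x' i‖ ^ u
          ≤ ∑ i, ‖C.mulVec x' i‖ ^ u :=
            Finset.sum_le_sum_of_subset_of_nonneg (Finset.subset_univ _)
              (fun i _ _ => by positivity)
        _ = lpNorm q (C.mulVec x') ^ u := (lpNorm_rpow hq hu0 _).symm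
        _ ≤ (ρ * lpNorm p x') ^ u :=
            Real.rpow_le_rpow (lpNorm_nonneg _ _) (hC x')
              hu0.le
        _ = ρ ^ u * Q ^ (u / t) := by
            rw [Real.mul_rpow hρpos.le (lpNorm_nonneg _ _)]
            congr 1
            rw [← hx't, ← Real.rpow_mul (lpNorm_nonneg _ _),
              mul_div_cancel₀ _ ht0.ne']
    calc (∑ i ∈ Finset.univ.filter (· ∈ R), ‖A.mulVec x i‖ ^ u)
          + ∑ i ∈ Finset.univ.filter (¬ · ∈ R), ‖A.mulVec x i‖ ^ u
        ≤ ρ ^ u * P ^ (u / t) + ρ ^ u * Q ^ (u / t) := add_le_add hT1 hT2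
      _ = ρ ^ u * ((P ^ (u/t)) + (Q ^ (u/t))) := by ring
      _ ≤ ρ ^ u * ((P + Q) ^ (u/t)) :=
          mul_le_mul_of_nonneg_left (myAddRpow hP0 hQ0 hut1) (Real.rpow_nonneg hρpos.le _)
      _ = (ρ * lpNorm p x) ^ u := by
          rw [Real.mul_rpow hρpos.le (lpNorm_nonneg _ _), ← hxt,
            ← Real.rpow_mul (lpNorm_nonneg _ _), mul_div_cancel₀ _ ht0.ne']
  have := (Real.rpow_le_rpow_iff (lpNorm_nonneg _ _) (mul_nonneg hρpos.le (lpNorm_nonneg _ _)) hu0).mp main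
  exact this


end helperLemmas

/-- Theorem 3 (converse direction, `1 < p ≤ q < ∞`): if every entry of maximal
absolute value `ρ` is the only nonzero entry of its row and column, and the
matrix `C` obtained by zeroing these entries satisfies `‖C‖_{p,q} ≤ ρ`, then
equality holds in the bound (1.5) for all `r < p` and `s > q`; in particular
`‖A‖_{p,q} = ρ`. -/
theorem stmt_13 {n m : ℕ} (A : Matrix (Fin n) (Fin m) ℂ) (p q : ℝ≥0∞)
    (hp : 1 < p) (hpq : p ≤ q) (hq : q ≠ ⊤) (ρ : ℝ)
    (hρ : IsGreatest {t : ℝ | ∃ i j, t = ‖A i j‖} ρ)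
    (hi : ∀ i j, ‖A i j‖ = ρ →
      (∀ j', j' ≠ j → A i j' = 0) ∧ (∀ i', i' ≠ i → A i' j = 0))
    (hC : opNorm p q (Matrix.of fun i j => if ‖A i j‖ = ρ then 0 else A i j) ≤ ρ) :
    (∀ r s : ℝ≥0∞, 1 ≤ r → r < p → q < s →
      opNorm r s A =
        (m : ℝ) ^ max ((1 / p).toReal - (1 / r).toReal) 0 *
          (n : ℝ) ^ max ((1 / s).toReal - (1 / q).toReal) 0 * opNorm p q A) ∧
    opNorm p q A = ρ := by
  classical
  obtain ⟨i0, j0, hρeq⟩ := hρ.1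
  have hρ0 : 0 ≤ ρ := hρeq ▸ norm_nonneg _
  have hpt : p ≠ ⊤ := fun h => hq (top_le_iff.mp (h ▸ hpq))
  have hq1 : 1 ≤ q := hp.le.trans hpq
  -- core estimate
  have hAx : ∀ x : Fin m → ℂ, lpNorm q (A.mulVec x) ≤ ρ * lpNorm p x := by
    rcases eq_or_lt_of_le hρ0 with hρz | hρpos
    · have hA0 : A = 0 := by
        ext i j
        have hm : ‖A i j‖ ≤ ρ := hρ.2 ⟨i, j, rfl⟩
        rw [← hρz] at hm
        simpa using norm_le_zero_iff.mp hm
      intro x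
      rw [hA0, Matrix.zero_mulVec, lpNorm_zero hq1, ← hρz, zero_mul]
    · have hC' : ∀ y, lpNorm q ((Matrix.of fun i j =>
          if ‖A i j‖ = ρ then 0 else A i j).mulVec y) ≤ ρ * lpNorm p y :=
        mulVec_le_opNorm hp.le hpt hq1 _ hρ0 hC
      exact key_estimate A p q hp hpq hq hρpos hi hC' j0
  -- upper bounds
  have hUB : ∀ a b : ℝ≥0∞, 1 ≤ a → a ≤ p → a ≠ ⊤ → q ≤ b → opNorm a b A ≤ ρ := by
    intro a b ha hap hat hqb
    apply opNorm_le ha hat A hρ0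
    intro x
    calc lpNorm b (A.mulVec x) ≤ lpNorm q (A.mulVec x) := lpNorm_anti hq1 hq hqb _
      _ ≤ ρ * lpNorm p x := hAx x
      _ ≤ ρ * lpNorm a x := mul_le_mul_of_nonneg_left (lpNorm_anti ha hat hap x) hρ0
  -- lower bounds
  have hLB : ∀ a b : ℝ≥0∞, 1 ≤ a → a ≠ ⊤ → 1 ≤ b → ρ ≤ opNorm a b A := by
    intro a b ha hat hb
    set e : Fin m → ℂ := fun j => if j = j0 then 1 else 0 with hedef
    have he : e ≠ 0 := by
      intro h
      have := congrFun h j0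
      simp [hedef] at this
    have h1 : lpNorm a e = 1 := by
      rw [lpNorm_single ha e j0 (fun j hj => if_neg hj)]
      simp [hedef]
    have h2 : A.mulVec e = fun i => A i j0 := by
      funext i
      show ∑ j, A i j * e j = A i j0
      rw [Finset.sum_eq_single j0]
      · simp [hedef]
      · intro j _ hj
        simp [hedef, if_neg hj]
      · intro h; exact absurd (Finset.mem_univ _) h
    have h3 : lpNorm b (A.mulVec e) = ρ := by
      rw [h2, lpNorm_single hb _ i0 (fun i hi' => (hi i0 j0 hρeq.symm).2 i hi')]
      exact hρeq.symm
    have := le_opNorm ha hat hb A e he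
    rwa [h1, h3, div_one] at this
  have hmain : opNorm p q A = ρ :=
    le_antisymm (hUB p q hp.le le_rfl hpt le_rfl) (hLB p q hp.le hpt hq1)
  refine ⟨?_, hmain⟩
  intro r s hr hrp hqs
  have hrt : r ≠ ⊤ := hrp.ne_top
  have heq : opNorm r s A = ρ :=
    le_antisymm (hUB r s hr hrp.le hrt hqs.le) (hLB r s hr hrt (hq1.trans hqs.le))
  have hsub : ∀ a b : ℝ≥0∞, a ≤ b → a ≠ 0 → (1 / b).toReal - (1 / a).toReal ≤ 0 := by
    intro a b hab ha0
    have h1 : (1 : ℝ≥0∞) / b ≤ 1 / a := ENNReal.div_le_div_left hab 1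
    have h2 : (1 : ℝ≥0∞) / a ≠ ⊤ := by
      simp [ENNReal.div_eq_top, ha0]
    have := ENNReal.toReal_mono h2 h1
    linarith
  have e1 : max ((1 / p).toReal - (1 / r).toReal) 0 = 0 :=
    max_eq_right (hsub r p hrp.le (by
      intro h; rw [h] at hr; simp at hr))
  have e2 : max ((1 / s).toReal - (1 / q).toReal) 0 = 0 :=
    max_eq_right (hsub q s hqs.le (by
      intro h; rw [h] at hq1; simp at hq1))
  rw [e1, e2, Real.rpow_zero, Real.rpow_zero, one_mul, one_mul, heq, hmain]
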